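/- Let n ≥ 2. The map ℒ : ℝ^{2^{n-1}} × ℝ^{2^{n-1}} → ℝ^{2^n} defined by ℒ(ᾱ, β) = α, where α_{2i−1} = ᾱ_i + (β r_n)_i and α_{2i} = ᾱ_i − (β r_n)_i for 1 ≤ i ≤ 2^{n-1} (β r_n denoting the row vector β multiplied by the matrix r_n), is a linear bijection, with inverse given by ᾱ_i = (α_{2i−1} + α_{2i})/2 and β = (1/2^{n-1}) · γ · r_n^T, where γ_i = (α_{2i−1} − α_{2i})/2. -/

import Mathlib

open Matrix

noncomputable section

/-- Kronecker product of square matrices with flat `Fin` indexing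
(first factor most significant: `(A ⊗ B)[i*b+r, j*b+s] = A[i,j] * B[r,s]`). -/
def kron {R : Type*} [Mul R] {a b : ℕ} (A : Matrix (Fin a) (Fin a) R)
    (B : Matrix (Fin b) (Fin b) R) : Matrix (Fin (a * b)) (Fin (a * b)) R := fun i j =>
  have hb : 0 < b := Nat.pos_of_ne_zero fun hb0 => by
    subst hb0; exact absurd i.isLt (by omega)
  A ⟨i.val / b, Nat.div_lt_of_lt_mul (Nat.mul_comm a b ▸ i.isLt)⟩
    ⟨j.val / b, Nat.div_lt_of_lt_mul (Nat.mul_comm a b ▸ j.isLt)⟩ *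
  B ⟨i.val % b, Nat.mod_lt _ hb⟩ ⟨j.val % b, Nat.mod_lt _ hb⟩

/-- Kronecker product of (column) vectors with flat `Fin` indexing. -/
def kronV {R : Type*} [Mul R] {a b : ℕ} (u : Fin a → R) (v : Fin b → R) :
    Fin (a * b) → R := fun i =>
  have hb : 0 < b := Nat.pos_of_ne_zero fun hb0 => by
    subst hb0; exact absurd i.isLt (by omega)
  u ⟨i.val / b, Nat.div_lt_of_lt_mul (Nat.mul_comm a b ▸ i.isLt)⟩ *
  v ⟨i.val % b, Nat.mod_lt _ hb⟩

/-- Transport a square matrix along an equality of sizes. -/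
def castM {R : Type*} {a b : ℕ} (h : a = b) (A : Matrix (Fin a) (Fin a) R) :
    Matrix (Fin b) (Fin b) R := fun i j => A (Fin.cast h.symm i) (Fin.cast h.symm j)

/-- Transport a vector along an equality of sizes. -/
def castV {R : Type*} {a b : ℕ} (h : a = b) (u : Fin a → R) : Fin b → R :=
  fun i => u (Fin.cast h.symm i)

theorem two_pow_pred_mul_two {n : ℕ} (hn : 1 ≤ n) : 2 ^ (n - 1) * 2 = 2 ^ n := by
  rw [← pow_succ]; congr 1; omega

theorem half_lt {n x : ℕ} (hx : x < 2 ^ n) : x / 2 < 2 ^ (n - 1) := by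
  rcases Nat.eq_zero_or_pos n with h | h
  · subst h; simp only [pow_zero] at hx ⊢; omega
  · have h2 : (2 : ℕ) ^ (n - 1) * 2 = 2 ^ n := two_pow_pred_mul_two h
    omega

/-- `⌊j/2⌋` as an element of `Fin (2^(n-1))`. -/
def half {n : ℕ} (j : Fin (2 ^ n)) : Fin (2 ^ (n - 1)) := ⟨j.val / 2, half_lt j.isLt⟩

/-- The index `2i` (1-indexed: `2i-1`). -/
def dbl {n : ℕ} (hn : 1 ≤ n) (i : Fin (2 ^ (n - 1))) : Fin (2 ^ n) :=
  ⟨2 * i.val, by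
    have h1 := i.isLt
    have h2 : (2 : ℕ) ^ (n - 1) * 2 = 2 ^ n := two_pow_pred_mul_two hn
    omega⟩

/-- The index `2i+1` (1-indexed: `2i`). -/
def dbl1 {n : ℕ} (hn : 1 ≤ n) (i : Fin (2 ^ (n - 1))) : Fin (2 ^ n) :=
  ⟨2 * i.val + 1, by
    have h1 := i.isLt
    have h2 : (2 : ℕ) ^ (n - 1) * 2 = 2 ^ n := two_pow_pred_mul_two hn
    omega⟩

/-- The identity matrix `I_m` over `ℂ`. -/
def idM (m : ℕ) : Matrix (Fin m) (Fin m) ℂ := 1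

/-- The 2×2 identity matrix `I_2`. -/
def I2 : Matrix (Fin 2) (Fin 2) ℂ := 1

/-- The Pauli matrix `X = [[0,1],[1,0]]`. -/
def pauliX : Matrix (Fin 2) (Fin 2) ℂ := !![0, 1; 1, 0]

/-- The projector `π₀ = [[1,0],[0,0]]`. -/
def proj0 : Matrix (Fin 2) (Fin 2) ℂ := !![1, 0; 0, 0]

/-- The projector `π₁ = [[0,0],[0,1]]`. -/
def proj1 : Matrix (Fin 2) (Fin 2) ℂ := !![0, 0; 0, 1]

/-- `D₁(φ) = diag(e^{iφ}, e^{-iφ})`. -/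
def D1 (φ : ℝ) : Matrix (Fin 2) (Fin 2) ℂ :=
  !![Complex.exp (Complex.I * (φ : ℂ)), 0; 0, Complex.exp (-(Complex.I * (φ : ℂ)))]

/-- `D_m(α) = diag(e^{iα₁}, …, e^{iα_{2^m}})`. -/
def Dm (m : ℕ) (α : Fin (2 ^ m) → ℝ) : Matrix (Fin (2 ^ m)) (Fin (2 ^ m)) ℂ :=
  Matrix.diagonal fun j => Complex.exp (Complex.I * (α j : ℂ))

/-- The control matrix
`L(k) = I^{⊗(k-1)} ⊗ π₀ ⊗ I^{⊗(n-k)} + I^{⊗(k-1)} ⊗ π₁ ⊗ I^{⊗(n-k-1)} ⊗ X`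
(defined to be the identity for `k` outside `{1,…,n-1}`). -/
def Lmat (n k : ℕ) : Matrix (Fin (2 ^ n)) (Fin (2 ^ n)) ℂ :=
  if h : 1 ≤ k ∧ k < n then
    castM (by rw [← pow_succ, ← pow_add]; congr 1; omega)
      (kron (kron (idM (2 ^ (k - 1))) proj0) (idM (2 ^ (n - k)))) +
    castM (by rw [← pow_succ, ← pow_add, ← pow_succ]; congr 1; omega)
      (kron (kron (kron (idM (2 ^ (k - 1))) proj1) (idM (2 ^ (n - k - 1)))) pauliX)
  else 1

/-- The half of the binary-tree sequence: `a_2 = (1)`,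
`a_m = (a_{m-1}+1) ∘ (1) ∘ (a_{m-1}+1)`. -/
def aSeq : ℕ → List ℕ
  | 0 => []
  | 1 => []
  | 2 => [1]
  | n + 3 => ((aSeq (n + 2)).map (· + 1)) ++ [1] ++ ((aSeq (n + 2)).map (· + 1))

/-- The binary-tree sequence `A_n = a_n ∘ (1)`. -/
def ASeq (n : ℕ) : List ℕ := aSeq n ++ [1]

/-- The all-ones vector `[1,1]^{⊗k}` (of arbitrary length). -/
def onesV (m : ℕ) : Fin m → ℝ := fun _ => 1

/-- The vector `[1,-1]`. -/
def signV : Fin 2 → ℝ := ![1, -1]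

/-- `v_m = [1,1]^{⊗(m-1)} ⊗ [1,-1] ⊗ [1,1]^{⊗(n-1-m)}`
(defined to be all-ones for `m` outside `{1,…,n-1}`). -/
def vvec (n m : ℕ) : Fin (2 ^ (n - 1)) → ℝ :=
  if h : 1 ≤ m ∧ m ≤ n - 1 then
    castV (by rw [← pow_succ, ← pow_add]; congr 1; omega)
      (kronV (kronV (onesV (2 ^ (m - 1))) signV) (onesV (2 ^ (n - 1 - m))))
  else onesV _

/-- The matrix `r_n`: its `i`-th column is the entrywise product
`∏_{k=1}^{i-1} v_{A_n(k)}`.  (`rMat n j i` is the `(j,i)` entry, `i` the column.) -/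
def rMat (n : ℕ) : Matrix (Fin (2 ^ (n - 1))) (Fin (2 ^ (n - 1))) ℝ :=
  fun j i => ∏ k ∈ Finset.range i.val, vvec n ((ASeq n).getD k 1) j

/-- `r_2 = [[1,1],[1,-1]]`. -/
def r2 : Matrix (Fin 2) (Fin 2) ℝ := !![1, 1; 1, -1]

/-- The `m`-fold Kronecker power `r_2^{⊗m}`. -/
def r2pow : (m : ℕ) → Matrix (Fin (2 ^ m)) (Fin (2 ^ m)) ℝ
  | 0 => 1
  | m + 1 => castM (pow_succ 2 m).symm (kron (r2pow m) r2)

/-- The block-diagonal matrix with 2×2 blocks `D₁(γ₁), …, D₁(γ_{2^{n-1}})`. -/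
def blockD1 (n : ℕ) (γ : Fin (2 ^ (n - 1)) → ℝ) :
    Matrix (Fin (2 ^ n)) (Fin (2 ^ n)) ℂ := fun x y =>
  if x.val / 2 = y.val / 2 then
    D1 (γ (half x)) ⟨x.val % 2, Nat.mod_lt _ (by norm_num)⟩
      ⟨y.val % 2, Nat.mod_lt _ (by norm_num)⟩
  else 0


/-- Character `(-1)^(popcount(s AND j))` restricted to `b` bits. -/
def chi : ℕ → ℕ → ℕ → ℝ
  | 0, _, _ => 1
  | b+1, s, j => (if s % 2 = 1 ∧ j % 2 = 1 then (-1:ℝ) else 1) * chi b (s/2) (j/2)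

lemma chi_zero (b j : ℕ) : chi b 0 j = 1 := by
  induction b generalizing j with
  | zero => rfl
  | succ b ih => simp [chi, ih]

lemma chi_symm (b s j : ℕ) : chi b s j = chi b j s := by
  induction b generalizing s j with
  | zero => rfl
  | succ b ih =>
    simp only [chi, ih (s/2) (j/2)]
    congr 1
    simp [and_comm]

lemma xor_div_two (s t : ℕ) : (s ^^^ t) / 2 = s/2 ^^^ t/2 := by
  apply Nat.eq_of_testBit_eq; intro i
  simp [Nat.testBit_div_two, Nat.testBit_xor]

lemma chi_mul (b : ℕ) : ∀ s t j, chi b s j * chi b t j = chi b (s ^^^ t) j := by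
  induction b with
  | zero => intro s t j; simp [chi]
  | succ b ih =>
    intro s t j
    simp only [chi]
    rw [xor_div_two, ← ih]
    have h1 : (s ^^^ t) % 2 = (s % 2 + t % 2) % 2 := by
      rw [Nat.xor_mod_two_eq]; omega
    rcases Nat.mod_two_eq_zero_or_one s with hs | hs <;>
      rcases Nat.mod_two_eq_zero_or_one t with ht | ht <;>
        rcases Nat.mod_two_eq_zero_or_one j with hj | hj <;>
          simp [hs, ht, hj, h1] <;> ring

lemma xor_lt_pow (b : ℕ) : ∀ s t, s < 2^b → t < 2^b → s ^^^ t < 2^b := by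
  induction b with
  | zero => intro s t hs ht; interval_cases s <;> interval_cases t <;> simp
  | succ b ih =>
    intro s t hs ht
    have h2 : (2:ℕ)^(b+1) = 2 * 2^b := by ring
    have hd : (s ^^^ t) / 2 = s/2 ^^^ t/2 := xor_div_two s t
    have := ih (s/2) (t/2) (by omega) (by omega)
    have hm : (s ^^^ t) % 2 < 2 := Nat.mod_lt _ (by norm_num)
    omega

lemma two_pow_xor (m : ℕ) : ∀ r, r < 2^m → 2^m ^^^ r = 2^m + r := by
  induction m with
  | zero => intro r hr; interval_cases r; rfl
  | succ m ih =>
    intro r hr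
    have h2 : (2:ℕ)^(m+1) = 2 * 2^m := by ring
    have hd : (2^(m+1) ^^^ r) / 2 = 2^m + r/2 := by
      rw [xor_div_two]
      rw [show (2:ℕ)^(m+1)/2 = 2^m by omega]
      exact ih (r/2) (by omega)
    have hm : (2^(m+1) ^^^ r) % 2 = (2^(m+1) + r) % 2 := Nat.xor_mod_two_eq
    omega

/-- The standard binary reflected Gray code. -/
def gray (i : ℕ) : ℕ := i ^^^ i / 2

lemma gray_lt (b i : ℕ) (h : i < 2^b) : gray i < 2^b :=
  xor_lt_pow b i (i/2) h (lt_of_le_of_lt (Nat.div_le_self _ _) h)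

lemma gray_inj {i j : ℕ} (h : gray i = gray j) : i = j := by
  have h0 : (i ^^^ i/2) ^^^ (j ^^^ j/2) = 0 := by
    show gray i ^^^ gray j = 0
    rw [h]; simp
  have hx : (i ^^^ j) ^^^ (i/2 ^^^ j/2) = 0 := by
    rw [← h0]
    rw [Nat.xor_assoc, Nat.xor_assoc]
    congr 1
    rw [← Nat.xor_assoc, ← Nat.xor_assoc, Nat.xor_comm j (i/2)]
  rw [← xor_div_two] at hx
  set x := i ^^^ j with hxdef
  have hx2 : x = x / 2 := by
    have := xor_eq_zero_iff.mp hx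
    omega
  have : x = 0 := by omega
  have := xor_eq_zero_iff.mp this
  omega

lemma gray_pred_pow (m : ℕ) : gray (2^(m+1) - 1) = 2^m := by
  have hp : (0:ℕ) < 2^m := Nat.two_pow_pos m
  have h2 : (2:ℕ)^(m+1) = 2 * 2^m := by ring
  have h1 : (2^(m+1)-1)/2 = 2^m - 1 := by omega
  have hlt : 2^m - 1 < 2^m := by omega
  have hx : 2^m ^^^ (2^m - 1) = 2^m + (2^m - 1) := two_pow_xor m _ hlt
  have h3 : 2^(m+1) - 1 = 2^m ^^^ (2^m - 1) := by rw [hx]; omega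
  rw [gray, h1, h3, xor_cancel_right]

lemma gray_add_pow (m r : ℕ) (h : r < 2^(m+1)) :
    gray (2^(m+1) + r) = (2^m ^^^ 2^(m+1)) ^^^ gray r := by
  have hp : (0:ℕ) < 2^m := Nat.two_pow_pos m
  have h2 : (2:ℕ)^(m+1) = 2 * 2^m := by ring
  have hd : (2^(m+1) + r)/2 = 2^m + r/2 := by omega
  rw [gray, hd, ← two_pow_xor (m+1) r h, ← two_pow_xor m (r/2) (by omega), gray]
  -- (2^(m+1) ^^^ r) ^^^ (2^m ^^^ r/2) = (2^m ^^^ 2^(m+1)) ^^^ (r ^^^ r/2)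
  rw [Nat.xor_comm (2^m) (2^(m+1)), Nat.xor_assoc, Nat.xor_assoc]
  congr 1
  rw [← Nat.xor_assoc, ← Nat.xor_assoc, Nat.xor_comm r (2^m)]


lemma sum_double (N : ℕ) (f : ℕ → ℝ) :
    ∑ j ∈ Finset.range (2*N), f j = ∑ j ∈ Finset.range N, (f (2*j) + f (2*j+1)) := by
  induction N with
  | zero => simp
  | succ N ih =>
    rw [Finset.sum_range_succ, ← ih, show 2*(N+1) = 2*N+1+1 by ring,
      Finset.sum_range_succ, Finset.sum_range_succ]
    ring

lemma chi_even (b s j : ℕ) : chi (b+1) s (2*j) = chi b (s/2) j := by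
  have h1 : (2*j) % 2 = 0 := by omega
  have h2 : (2*j) / 2 = j := by omega
  simp [chi, h1, h2]

lemma chi_odd (b s j : ℕ) :
    chi (b+1) s (2*j+1) = (if s % 2 = 1 then (-1:ℝ) else 1) * chi b (s/2) j := by
  have h1 : (2*j+1) % 2 = 1 := by omega
  have h2 : (2*j+1) / 2 = j := by omega
  simp [chi, h1, h2]

lemma chi_orth (b : ℕ) : ∀ s t, s < 2^b → t < 2^b →
    ∑ j ∈ Finset.range (2^b), chi b s j * chi b t j = if s = t then ((2:ℝ)^b) else 0 := by
  induction b with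
  | zero =>
    intro s t hs ht
    interval_cases s <;> interval_cases t <;> simp [chi]
  | succ b ih =>
    intro s t hs ht
    have h2 : (2:ℕ)^(b+1) = 2 * 2^b := by ring
    rw [h2, sum_double]
    have key : ∀ j, chi (b+1) s (2*j) * chi (b+1) t (2*j)
        + chi (b+1) s (2*j+1) * chi (b+1) t (2*j+1)
        = (1 + (if s % 2 = 1 then (-1:ℝ) else 1) * (if t % 2 = 1 then (-1:ℝ) else 1))
          * (chi b (s/2) j * chi b (t/2) j) := by
      intro j
      rw [chi_even, chi_even, chi_odd, chi_odd]
      ring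
    rw [Finset.sum_congr rfl fun j _ => key j, ← Finset.mul_sum,
      ih (s/2) (t/2) (by omega) (by omega)]
    rcases Nat.mod_two_eq_zero_or_one s with hs2 | hs2 <;>
      rcases Nat.mod_two_eq_zero_or_one t with ht2 | ht2
    · have hiff : s = t ↔ s/2 = t/2 := by omega
      by_cases hd : s/2 = t/2 <;> simp [hs2, ht2, hiff, hd] <;> ring
    · have hne : s ≠ t := by omega
      simp [hs2, ht2, hne]
    · have hne : s ≠ t := by omega
      simp [hs2, ht2, hne]
    · have hiff : s = t ↔ s/2 = t/2 := by omega
      by_cases hd : s/2 = t/2 <;> simp [hs2, ht2, hiff, hd] <;> ring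

lemma chi_pow (b : ℕ) : ∀ e j, e < b →
    chi b (2^e) j = if (j / 2^e) % 2 = 1 then (-1:ℝ) else 1 := by
  induction b with
  | zero => intro e j h; omega
  | succ b ih =>
    intro e j h
    match e with
    | 0 =>
      have h1 : (2:ℕ)^0 % 2 = 1 := by norm_num
      simp only [chi, h1, true_and, Nat.pow_zero, Nat.div_one]
      rw [show (1:ℕ)/2 = 0 from rfl, chi_zero, mul_one]
    | e+1 =>
      have h1 : (2:ℕ)^(e+1) % 2 = 0 := by
        have : (2:ℕ)^(e+1) = 2*2^e := by ring
        omega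
      have h2 : (2:ℕ)^(e+1)/2 = 2^e := by
        have : (2:ℕ)^(e+1) = 2*2^e := by ring
        omega
      show (if 2^(e+1) % 2 = 1 ∧ j % 2 = 1 then (-1:ℝ) else 1) * chi b (2^(e+1)/2) (j/2)
        = _
      rw [if_neg (by simp [h1]), one_mul, h2, ih e (j/2) (by omega)]
      have h3 : j / 2 / 2^e = j / 2^(e+1) := by
        rw [Nat.div_div_eq_div_mul]
        congr 1
        ring
      rw [h3]


-- Layer 2: the Gray-code structure of the binary-tree sequence

def gxor (n : ℕ) (l : List ℕ) : ℕ := l.foldr (fun m acc => 2^(n-1-m) ^^^ acc) 0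

lemma gxor_nil (n : ℕ) : gxor n [] = 0 := rfl

lemma gxor_cons (n x : ℕ) (l : List ℕ) : gxor n (x :: l) = 2^(n-1-x) ^^^ gxor n l := rfl

lemma gxor_append (n : ℕ) (l1 l2 : List ℕ) :
    gxor n (l1 ++ l2) = gxor n l1 ^^^ gxor n l2 := by
  induction l1 with
  | nil => simp [gxor_nil, gxor]
  | cons a l ih => simp [gxor_cons, ih, Nat.xor_assoc]

lemma gxor_map_succ (n : ℕ) (l : List ℕ) :
    gxor (n+1) (l.map (· + 1)) = gxor n l := by
  induction l with
  | nil => rfl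
  | cons a l ih =>
    simp only [List.map_cons, gxor_cons, ih]
    congr 2
    omega

lemma aSeq_succ (n : ℕ) (h : 2 ≤ n) :
    aSeq (n+1) = ((aSeq n).map (· + 1)) ++ [1] ++ ((aSeq n).map (· + 1)) := by
  obtain ⟨m, rfl⟩ : ∃ m, n = m + 2 := ⟨n - 2, by omega⟩
  rfl

lemma aSeq_length (n : ℕ) (h : 2 ≤ n) : (aSeq n).length = 2^(n-1) - 1 := by
  induction n, h using Nat.le_induction with
  | base => rfl
  | succ n hn ih =>
    rw [aSeq_succ n hn]
    simp only [List.length_append, List.length_map, List.length_cons, List.length_nil, ih,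
      Nat.add_sub_cancel]
    have h1 : (0:ℕ) < 2^(n-1) := Nat.two_pow_pos _
    have h2 : (2:ℕ)^n = 2 * 2^(n-1) := by
      rw [← pow_succ']
      congr 1
      omega
    omega

lemma aSeq_mem (n : ℕ) (h : 2 ≤ n) : ∀ x ∈ aSeq n, 1 ≤ x ∧ x ≤ n - 1 := by
  induction n, h using Nat.le_induction with
  | base => intro x hx; simp [aSeq] at hx; omega
  | succ n hn ih =>
    intro x hx
    rw [aSeq_succ n hn] at hx
    simp only [List.mem_append, List.mem_map, List.mem_singleton] at hx
    rcases hx with (⟨y, hy, rfl⟩ | rfl) | ⟨y, hy, rfl⟩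
    · have := ih y hy; omega
    · omega
    · have := ih y hy; omega

lemma gray_aSeq (n : ℕ) (h : 2 ≤ n) :
    ∀ i, i ≤ 2^(n-1) - 1 → gxor n ((aSeq n).take i) = gray i := by
  induction n, h using Nat.le_induction with
  | base =>
    intro i hi
    have hi1 : i ≤ 1 := by simpa using hi
    interval_cases i
    · rfl
    · rfl
  | succ n hn ih =>
    intro i hi
    simp only [Nat.add_sub_cancel] at hi
    have hlen : (aSeq n).length = 2^(n-1) - 1 := aSeq_length n hn
    have h1 : (0:ℕ) < 2^(n-1) := Nat.two_pow_pos _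
    have h2 : (2:ℕ)^n = 2 * 2^(n-1) := by
      rw [← pow_succ']; congr 1; omega
    set L : ℕ := 2^(n-1) - 1 with hL
    set M : List ℕ := (aSeq n).map (· + 1) with hM
    have hMlen : M.length = L := by simp [hM, hlen]
    have hgM : ∀ r, r ≤ L → gxor (n+1) (M.take r) = gray r := by
      intro r hr
      rw [hM, ← List.map_take, gxor_map_succ, ih r hr]
    rw [aSeq_succ n hn]
    by_cases hcase : i ≤ L
    · have hle1 : i ≤ (M ++ [1]).length := by
        simp only [List.length_append, List.length_cons, List.length_nil, hMlen]
        omega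
      have hle2 : i ≤ M.length := by rw [hMlen]; exact hcase
      rw [List.take_append_of_le_length hle1, List.take_append_of_le_length hle2]
      exact hgM i hcase
    · push_neg at hcase
      set r : ℕ := i - (L + 1) with hr
      have hrL : r ≤ L := by omega
      have hlen1 : (M ++ [1]).length = L + 1 := by
        simp only [List.length_append, List.length_cons, List.length_nil, hMlen]
      have hsplit : ((M ++ [1]) ++ M).take i = (M ++ [1]) ++ M.take r := by
        rw [List.take_append,
          List.take_of_length_le (by rw [hlen1]; omega), hlen1]
      rw [hsplit, gxor_append, gxor_append, hgM r hrL]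
      have hfullM : gxor (n+1) M = gray L := by
        have := hgM L le_rfl
        rwa [List.take_of_length_le (le_of_eq hMlen)] at this
      rw [hfullM]
      have hone : gxor (n+1) [1] = 2^(n-1) := by
        rw [gxor_cons, gxor_nil, Nat.xor_zero]
        congr 1
      rw [hone]
      obtain ⟨m, hm⟩ : ∃ m, n = m + 2 := ⟨n - 2, by omega⟩
      have hn1 : n - 1 = m + 1 := by omega
      have hpm : (2:ℕ)^(n-1) = 2^(m+1) := by rw [hn1]
      have hLval : L = 2^(m+1) - 1 := by omega
      have hgL : gray L = 2^m := by rw [hLval]; exact gray_pred_pow m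
      have higray : gray i = (2^m ^^^ 2^(m+1)) ^^^ gray r := by
        rw [show i = 2^(m+1) + r by omega]
        exact gray_add_pow m r (by omega)
      rw [higray, hgL, hn1]


-- Layer 3: entries of rMat in terms of chi and gray

lemma vvec_chi (n : ℕ) (hn : 2 ≤ n) (m : ℕ) (h1 : 1 ≤ m) (h2 : m ≤ n - 1)
    (j : Fin (2 ^ (n-1))) : vvec n m j = chi (n-1) (2^(n-1-m)) j.val := by
  have he : n - 1 - m < n - 1 := by omega
  rw [chi_pow (n-1) (n-1-m) j.val he]
  have hd : vvec n m j = signV ⟨(j.val / 2^(n-1-m)) % 2, Nat.mod_lt _ (by norm_num)⟩ := by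
    rw [vvec, dif_pos ⟨h1, h2⟩]
    simp only [castV, kronV, onesV, signV, one_mul, mul_one, Fin.coe_cast]
  rw [hd]
  rcases Nat.mod_two_eq_zero_or_one (j.val / 2^(n-1-m)) with h | h
  · have h0 : (⟨j.val / 2^(n-1-m) % 2, Nat.mod_lt _ (by norm_num)⟩ : Fin 2) = 0 := by
      simp [Fin.ext_iff, h]
    rw [h0, if_neg (by simp [h])]
    simp [signV]
  · have h0 : (⟨j.val / 2^(n-1-m) % 2, Nat.mod_lt _ (by norm_num)⟩ : Fin 2) = 1 := by
      simp [Fin.ext_iff, h]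
    rw [h0, if_pos h]
    simp [signV]

lemma rMat_eq (n : ℕ) (hn : 2 ≤ n) (j i : Fin (2^(n-1))) :
    rMat n j i = chi (n-1) (gray i.val) j.val := by
  have hlen : (aSeq n).length = 2^(n-1) - 1 := aSeq_length n hn
  have hpos : (0:ℕ) < 2^(n-1) := Nat.two_pow_pos _
  have key : ∀ r, r ≤ 2^(n-1) - 1 →
      (∏ k ∈ Finset.range r, vvec n ((ASeq n).getD k 1) j)
        = chi (n-1) (gxor n ((aSeq n).take r)) j.val := by
    intro r
    induction r with
    | zero => intro _; simp [List.take_zero, gxor_nil, chi_zero]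
    | succ r ih =>
      intro hle
      have hrlt : r < (aSeq n).length := by omega
      rw [Finset.prod_range_succ, ih (by omega)]
      have hget : (ASeq n).getD r 1 = (aSeq n)[r] := by
        rw [ASeq, List.getD_append _ _ _ _ hrlt, List.getD_eq_getElem _ _ hrlt]
      have hmem : (aSeq n)[r] ∈ aSeq n := List.getElem_mem hrlt
      obtain ⟨hx1, hx2⟩ := aSeq_mem n hn _ hmem
      rw [hget, vvec_chi n hn _ hx1 hx2 j, chi_mul]
      congr 1
      rw [List.take_succ, List.getElem?_eq_getElem hrlt]
      simp only [Option.toList_some, gxor_append, gxor_cons, gxor_nil, Nat.xor_zero]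
  have hi : i.val ≤ 2^(n-1) - 1 := by have := i.isLt; omega
  rw [rMat, key i.val hi, gray_aSeq n hn i.val hi]

lemma rMat_mul_transpose (n : ℕ) (hn : 2 ≤ n) :
    rMat n * (rMat n)ᵀ = ((2:ℝ)^(n-1)) • (1 : Matrix (Fin (2^(n-1))) (Fin (2^(n-1))) ℝ) := by
  ext j k
  rw [Matrix.mul_apply]
  simp only [Matrix.transpose_apply]
  have hterm : ∀ x : Fin (2^(n-1)), rMat n j x * rMat n k x
      = chi (n-1) j.val (gray x.val) * chi (n-1) k.val (gray x.val) := by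
    intro x
    rw [rMat_eq n hn j x, rMat_eq n hn k x, chi_symm (n-1) (gray x.val) j.val,
      chi_symm (n-1) (gray x.val) k.val]
  rw [Finset.sum_congr rfl fun x _ => hterm x]
  rw [Fin.sum_univ_eq_sum_range (fun x => chi (n-1) j.val (gray x) * chi (n-1) k.val (gray x))]
  have himg : (Finset.range (2^(n-1))).image gray = Finset.range (2^(n-1)) := by
    apply Finset.eq_of_subset_of_card_le
    · intro s hs
      simp only [Finset.mem_image, Finset.mem_range] at hs ⊢
      obtain ⟨x, hx, rfl⟩ := hs
      exact gray_lt _ _ hx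
    · rw [Finset.card_image_of_injOn fun a _ b _ hab => gray_inj hab,
        Finset.card_range]
  have hre : ∑ x ∈ Finset.range (2^(n-1)), chi (n-1) j.val (gray x) * chi (n-1) k.val (gray x)
      = ∑ s ∈ Finset.range (2^(n-1)), chi (n-1) j.val s * chi (n-1) k.val s := by
    have hs := Finset.sum_image (s := Finset.range (2^(n-1))) (g := gray)
      (f := fun s => chi (n-1) j.val s * chi (n-1) k.val s)
      (fun a _ b _ hab => gray_inj hab)
    rw [← hs, himg]
  rw [hre, chi_orth (n-1) j.val k.val j.isLt k.isLt]
  simp only [Matrix.smul_apply, Matrix.one_apply, smul_eq_mul]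
  by_cases hjk : j = k
  · rw [if_pos (by rw [hjk]), if_pos hjk, mul_one]
  · rw [if_neg (fun h => hjk (Fin.ext h)), if_neg hjk, mul_zero]

lemma rMat_transpose_mul (n : ℕ) (hn : 2 ≤ n) :
    (rMat n)ᵀ * rMat n = ((2:ℝ)^(n-1)) • (1 : Matrix (Fin (2^(n-1))) (Fin (2^(n-1))) ℝ) := by
  have hc : ((2:ℝ)^(n-1)) ≠ 0 := by positivity
  have h1 : rMat n * (((2:ℝ)^(n-1))⁻¹ • (rMat n)ᵀ) = 1 := by
    rw [Matrix.mul_smul, rMat_mul_transpose n hn, smul_smul, inv_mul_cancel₀ hc, one_smul]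
  have h2 : (((2:ℝ)^(n-1))⁻¹ • (rMat n)ᵀ) * rMat n = 1 := mul_eq_one_comm.mp h1
  calc (rMat n)ᵀ * rMat n = ((2:ℝ)^(n-1)) • ((((2:ℝ)^(n-1))⁻¹ • (rMat n)ᵀ) * rMat n) := by
        rw [Matrix.smul_mul, smul_smul, mul_inv_cancel₀ hc, one_smul]
    _ = ((2:ℝ)^(n-1)) • 1 := by rw [h2]



lemma vecMul_smul_one {N : ℕ} (c : ℝ) (v : Fin N → ℝ) :
    Matrix.vecMul v (c • (1 : Matrix (Fin N) (Fin N) ℝ)) = c • v := by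
  ext i
  simp [Matrix.vecMul, dotProduct, Matrix.one_apply, mul_comm,
    Finset.sum_ite_eq, mul_ite]

lemma idx_cases {n : ℕ} (hn : 1 ≤ n) (j : Fin (2^n)) :
    j = dbl hn (half j) ∨ j = dbl1 hn (half j) := by
  rcases Nat.mod_two_eq_zero_or_one j.val with h | h
  · left; apply Fin.ext; show j.val = 2 * (j.val / 2); omega
  · right; apply Fin.ext; show j.val = 2 * (j.val / 2) + 1; omega

theorem stmt10 (n : ℕ) (hn : 2 ≤ n)
    (L : (Fin (2 ^ (n - 1)) → ℝ) × (Fin (2 ^ (n - 1)) → ℝ) → (Fin (2 ^ n) → ℝ))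
    (hL : ∀ p : (Fin (2 ^ (n - 1)) → ℝ) × (Fin (2 ^ (n - 1)) → ℝ),
      ∀ i : Fin (2 ^ (n - 1)),
        L p (dbl (by omega) i) = p.1 i + Matrix.vecMul p.2 (rMat n) i ∧
        L p (dbl1 (by omega) i) = p.1 i - Matrix.vecMul p.2 (rMat n) i) :
    IsLinearMap ℝ L ∧ Function.Bijective L ∧
    ∀ (ᾱ β : Fin (2 ^ (n - 1)) → ℝ) (α : Fin (2 ^ n) → ℝ), L (ᾱ, β) = α →
      (∀ i, ᾱ i = (α (dbl (by omega) i) + α (dbl1 (by omega) i)) / 2) ∧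
      β = ((2 : ℝ) ^ (n - 1))⁻¹ •
        Matrix.vecMul (fun i => (α (dbl (by omega) i) - α (dbl1 (by omega) i)) / 2)
          (rMat n)ᵀ := by
  have hn1 : (1:ℕ) ≤ n := by omega
  set R := rMat n with hR
  have hRRT : R * Rᵀ = ((2:ℝ)^(n-1)) • 1 := rMat_mul_transpose n hn
  have hRTR : Rᵀ * R = ((2:ℝ)^(n-1)) • 1 := rMat_transpose_mul n hn
  have hc : ((2:ℝ)^(n-1)) ≠ 0 := by positivity
  have hrec : ∀ β : Fin (2^(n-1)) → ℝ,
      Matrix.vecMul (Matrix.vecMul β R) Rᵀ = ((2:ℝ)^(n-1)) • β := by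
    intro β; rw [Matrix.vecMul_vecMul, hRRT, vecMul_smul_one]
  have hrec2 : ∀ γ : Fin (2^(n-1)) → ℝ,
      Matrix.vecMul (Matrix.vecMul γ Rᵀ) R = ((2:ℝ)^(n-1)) • γ := by
    intro γ; rw [Matrix.vecMul_vecMul, hRTR, vecMul_smul_one]
  -- explicit inverse
  set Linv : (Fin (2^n) → ℝ) → (Fin (2^(n-1)) → ℝ) × (Fin (2^(n-1)) → ℝ) :=
    fun α => (fun i => (α (dbl hn1 i) + α (dbl1 hn1 i)) / 2,
      ((2:ℝ)^(n-1))⁻¹ •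
        Matrix.vecMul (fun i => (α (dbl hn1 i) - α (dbl1 hn1 i)) / 2) Rᵀ) with hLinv
  have e1 : ∀ p i, L p (dbl hn1 i) = p.1 i + Matrix.vecMul p.2 R i := fun p i => (hL p i).1
  have e2 : ∀ p i, L p (dbl1 hn1 i) = p.1 i - Matrix.vecMul p.2 R i := fun p i => (hL p i).2
  have hLinvL : ∀ p, Linv (L p) = p := by
    intro p
    have hfst : (fun i => (L p (dbl hn1 i) + L p (dbl1 hn1 i)) / 2) = p.1 := by
      funext i; rw [e1, e2]; ring
    have hγ : (fun i => (L p (dbl hn1 i) - L p (dbl1 hn1 i)) / 2) = Matrix.vecMul p.2 R := by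
      funext i; rw [e1, e2]; ring
    rw [hLinv]
    refine Prod.ext hfst ?_
    show ((2:ℝ)^(n-1))⁻¹ •
      Matrix.vecMul (fun i => (L p (dbl hn1 i) - L p (dbl1 hn1 i)) / 2) Rᵀ = p.2
    rw [hγ, hrec p.2, smul_smul, inv_mul_cancel₀ hc, one_smul]
  have hLLinv : ∀ α, L (Linv α) = α := by
    intro α
    have hβ : Matrix.vecMul (Linv α).2 R
        = fun i => (α (dbl hn1 i) - α (dbl1 hn1 i)) / 2 := by
      show Matrix.vecMul (((2:ℝ)^(n-1))⁻¹ •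
        Matrix.vecMul (fun i => (α (dbl hn1 i) - α (dbl1 hn1 i)) / 2) Rᵀ) R = _
      rw [Matrix.smul_vecMul, hrec2, smul_smul, inv_mul_cancel₀ hc, one_smul]
    funext j
    rcases idx_cases hn1 j with hj | hj
    · rw [hj, e1 (Linv α) (half j), hβ]
      show ((α (dbl hn1 (half j)) + α (dbl1 hn1 (half j))) / 2)
        + ((α (dbl hn1 (half j)) - α (dbl1 hn1 (half j))) / 2) = α (dbl hn1 (half j))
      ring
    · rw [hj, e2 (Linv α) (half j), hβ]
      show ((α (dbl hn1 (half j)) + α (dbl1 hn1 (half j))) / 2)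
        - ((α (dbl hn1 (half j)) - α (dbl1 hn1 (half j))) / 2) = α (dbl1 hn1 (half j))
      ring
  refine ⟨⟨?_, ?_⟩, ⟨Function.LeftInverse.injective hLinvL,
    Function.RightInverse.surjective hLLinv⟩, ?_⟩
  · -- additivity
    intro p q
    funext j
    have hfst : (p + q).1 = p.1 + q.1 := rfl
    have hsnd : (p + q).2 = p.2 + q.2 := rfl
    rcases idx_cases hn1 j with hj | hj
    · rw [hj, e1 (p+q) (half j), Pi.add_apply (L p) (L q), e1 p (half j), e1 q (half j),
        hfst, hsnd, Matrix.add_vecMul, Pi.add_apply, Pi.add_apply]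
      ring
    · rw [hj, e2 (p+q) (half j), Pi.add_apply (L p) (L q), e2 p (half j), e2 q (half j),
        hfst, hsnd, Matrix.add_vecMul, Pi.add_apply, Pi.add_apply]
      ring
  · -- homogeneity
    intro c p
    funext j
    have hfst : (c • p).1 = c • p.1 := rfl
    have hsnd : (c • p).2 = c • p.2 := rfl
    rcases idx_cases hn1 j with hj | hj
    · rw [hj, e1 (c • p) (half j), Pi.smul_apply, e1 p (half j),
        hfst, hsnd, Matrix.smul_vecMul, Pi.smul_apply, Pi.smul_apply]
      simp only [smul_eq_mul]
      ring
    · rw [hj, e2 (c • p) (half j), Pi.smul_apply, e2 p (half j),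
        hfst, hsnd, Matrix.smul_vecMul, Pi.smul_apply, Pi.smul_apply]
      simp only [smul_eq_mul]
      ring
  · -- recovery formulas
    intro ᾱ β α hα
    have f1 : ∀ i, α (dbl hn1 i) = ᾱ i + Matrix.vecMul β R i := by
      intro i; rw [← hα]; exact e1 (ᾱ, β) i
    have f2 : ∀ i, α (dbl1 hn1 i) = ᾱ i - Matrix.vecMul β R i := by
      intro i; rw [← hα]; exact e2 (ᾱ, β) i
    constructor
    · intro i
      show ᾱ i = (α (dbl hn1 i) + α (dbl1 hn1 i)) / 2
      rw [f1, f2]; ring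
    · have hγ : (fun i => (α (dbl hn1 i) - α (dbl1 hn1 i)) / 2)
          = Matrix.vecMul β R := by
        funext i; rw [f1, f2]; ring
      show β = ((2:ℝ)^(n-1))⁻¹ •
        Matrix.vecMul (fun i => (α (dbl hn1 i) - α (dbl1 hn1 i)) / 2) Rᵀ
      rw [hγ, hrec β, smul_smul, inv_mul_cancel₀ hc, one_smul]

end
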